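/- Let X and Y be compact Hausdorff spaces and let φ : Y → X be a continuous map, inducing the unital *-homomorphism φ* : C(X) → C(Y), f ↦ f ∘ φ. If φ* has real rank zero, then φ is constant on every connected component of Y: whenever y₁ and y₂ lie in the same connected component of Y, one has φ(y₁) = φ(y₂). -/

import Mathlib

open Filter Topology
open scoped ComplexOrder

section Defs

variable {B : Type*} [NonUnitalNormedRing B] [StarRing B] [PartialOrder B]

/-- A projection in a C*-algebra: a self-adjoint idempotent. -/
def IsProjection (p : B) : Prop := star p = p ∧ p * p = p

/-- The hereditary subalgebra `cl(a·S·a)`: the norm closure of `{a * b * a : b ∈ S}`. -/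
def herSub (S : Set B) (a : B) : Set B := closure {x : B | ∃ b ∈ S, x = a * b * a}

/-- `T` has an approximate unit of projections. -/
def HasApproxUnitOfProjections (T : Set B) : Prop :=
  ∀ x ∈ T, 0 ≤ x → ∀ ε : ℝ, 0 < ε → ∃ p ∈ T, IsProjection p ∧ ‖p * x - x‖ < ε

/-- The inclusion `A ⊆ S` of C*-algebras has real rank zero. -/
def InclusionRealRankZero (A S : Set B) : Prop :=
  ∀ a ∈ A, 0 ≤ a → a ≠ 0 → HasApproxUnitOfProjections (herSub S a)

end Defs

theorem stmt12 {X Y : Type*} [TopologicalSpace X] [CompactSpace X] [T2Space X]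
    [TopologicalSpace Y] [CompactSpace Y] [T2Space Y] (φ : C(Y, X))
    (h : InclusionRealRankZero (Set.range fun f : C(X, ℂ) => f.comp φ)
      (Set.univ : Set C(Y, ℂ))) :
    ∀ y₁ y₂ : Y, y₂ ∈ connectedComponent y₁ → φ y₁ = φ y₂ := by
  intro y₁ y₂ hy
  by_contra hne
  obtain ⟨f, hf0, hf1, hf01⟩ := exists_continuous_zero_one_of_isClosed
    (isClosed_singleton (x := φ y₂)) (isClosed_singleton (x := φ y₁))
    (by simpa [Set.disjoint_singleton] using fun e => hne e.symm)
  set g : C(X, ℂ) := ⟨fun x => (f x : ℂ), Complex.continuous_ofReal.comp f.continuous⟩ with hg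
  set a : C(Y, ℂ) := g.comp φ with ha
  have haApp : ∀ y, a y = (f (φ y) : ℂ) := fun y => rfl
  have ha1 : a y₁ = 1 := by rw [haApp, hf1 rfl]; norm_num
  have ha2 : a y₂ = 0 := by rw [haApp, hf0 rfl]; norm_num
  have hanneg : ∀ y, (0 : ℂ) ≤ a y := fun y => by
    rw [haApp]; exact Complex.zero_le_real.2 (hf01 (φ y)).1
  have ha_nonneg : (0 : C(Y, ℂ)) ≤ a := fun y => hanneg y
  have ha_ne : a ≠ 0 := by
    intro h0
    have := ha1
    rw [h0] at this
    simp at this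
  set x : C(Y, ℂ) := a * a * a with hx
  have hx_mem : x ∈ herSub (Set.univ : Set C(Y, ℂ)) a :=
    subset_closure ⟨a, Set.mem_univ a, rfl⟩
  have hx_nonneg : (0 : C(Y, ℂ)) ≤ x := fun y => by
    show (0 : ℂ) ≤ (a * a * a) y
    simpa using mul_nonneg (mul_nonneg (hanneg y) (hanneg y)) (hanneg y)
  obtain ⟨p, hp_mem, ⟨hpstar, hpidem⟩, hpnorm⟩ :=
    h a ⟨g, rfl⟩ ha_nonneg ha_ne x hx_mem hx_nonneg (1/2) (by norm_num)
  have hclosed : IsClosed {q : C(Y, ℂ) | q y₂ = 0} :=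
    isClosed_eq (continuous_eval_const y₂) continuous_const
  have hp2 : p y₂ = 0 := by
    have hsub : {q : C(Y, ℂ) | ∃ b ∈ (Set.univ : Set C(Y, ℂ)), q = a * b * a}
        ⊆ {q : C(Y, ℂ) | q y₂ = 0} := by
      rintro q ⟨b, -, rfl⟩
      simp [ha2]
    exact closure_minimal hsub hclosed hp_mem
  have hp01 : ∀ y, p y = 0 ∨ p y = 1 := by
    intro y
    have h1 : p y * p y = p y := by
      have := congrFun (congrArg (fun q : C(Y, ℂ) => (q : Y → ℂ)) hpidem) y
      simpa using this
    have h2 : p y * (p y - 1) = 0 := by linear_combination h1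
    rcases mul_eq_zero.1 h2 with h' | h'
    · exact Or.inl h'
    · exact Or.inr (by linear_combination h')
  have hC1 : IsClosed {y : Y | p y = 0} := isClosed_eq (map_continuous p) continuous_const
  have hC2 : IsClosed {y : Y | p y = 1} := isClosed_eq (map_continuous p) continuous_const
  have hcompl : {y : Y | p y = 0} = {y : Y | p y = 1}ᶜ := by
    ext y
    rcases hp01 y with h' | h' <;> simp [h']
  have hU : IsClopen {y : Y | p y = 0} := ⟨hC1, by rw [hcompl]; exact hC2.isOpen_compl⟩
  have hy₁mem : y₁ ∈ connectedComponent y₂ := by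
    rw [← connectedComponent_eq hy]
    exact mem_connectedComponent
  have hp1 : p y₁ = 0 := hU.connectedComponent_subset hp2 hy₁mem
  have hxy : x y₁ = 1 := by
    rw [hx]
    simp [ha1]
  have hval : (p * x - x) y₁ = -1 := by
    simp [hp1, hxy]
  have hge : (1 : ℝ) ≤ ‖p * x - x‖ := by
    have := ContinuousMap.norm_coe_le_norm (p * x - x) y₁
    rw [hval] at this
    simpa using this
  linarith
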